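/- arXiv:2105.04811 — 3 statements merged into one kernel-verified Lean document; each statement's English description precedes it below -/
import Mathlib

section
/- The function f(N) = (N - 5√N + 4)/24 - (√N/π)·(ln(16N) + 2) satisfies f(N) > 6 for all real N > 13300. -/
open Real in
/-- The function `f(N) = (N - 5√N + 4)/24 - (√N/π)(ln(16N) + 2)` satisfies
`f(N) > 6` for all real `N > 13300`. -/
theorem genus_lower_bound_exceeds_six (N : ℝ) (hN : N > 13300) :
    (N - 5 * Real.sqrt N + 4) / 24 - (Real.sqrt N / π) * (Real.log (16 * N) + 2) > 6 := by
  have hN0 : (0:ℝ) < N := by linarith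
  set t := Real.sqrt N with ht_def
  have ht0 : 0 < t := Real.sqrt_pos.mpr hN0
  have ht2 : t ^ 2 = N := Real.sq_sqrt hN0.le
  have ht : (115.32 : ℝ) ≤ t := by nlinarith [ht2, ht0.le]
  -- log 2 bound
  have hlog2 : Real.log 2 < 0.6931471808 := Real.log_two_lt_d9
  have hlog2' : 0 < Real.log 2 := Real.log_pos (by norm_num)
  -- tangent line bound: log t ≤ 7 log 2 + t/128 - 1
  have htan : Real.log t ≤ 7 * Real.log 2 + t / 128 - 1 := by
    have h1 : Real.log (t / 128) ≤ t / 128 - 1 :=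
      Real.log_le_sub_one_of_pos (by positivity)
    have h2 : Real.log (t / 128) = Real.log t - 7 * Real.log 2 := by
      rw [Real.log_div ht0.ne' (by norm_num), show (128:ℝ) = 2 ^ 7 by norm_num,
        Real.log_pow]
      push_cast
      ring
    linarith [h2 ▸ h1]
  -- log(16 N) = 4 log 2 + 2 log t
  have hlog16N : Real.log (16 * N) = 4 * Real.log 2 + 2 * Real.log t := by
    rw [show (16 : ℝ) * N = 2 ^ 4 * t ^ 2 by rw [ht2]; norm_num,
      Real.log_mul (by norm_num) (by positivity), Real.log_pow, Real.log_pow]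
    push_cast
    ring
  have hL : Real.log (16 * N) + 2 ≤ 18 * Real.log 2 + t / 64 := by
    rw [hlog16N]; linarith
  have hU : (0:ℝ) < 18 * Real.log 2 + t / 64 := by positivity
  have hπ : (3.141592 : ℝ) < π := Real.pi_gt_d6
  have hπ0 : (0:ℝ) < π := Real.pi_pos
  -- bound the subtracted term
  have key : (t / π) * (Real.log (16 * N) + 2)
      ≤ t * (18 * (0.6931471808 : ℝ) + t / 64) / 3.141592 := by
    have h1 : (t / π) * (Real.log (16 * N) + 2) ≤ t * (18 * Real.log 2 + t / 64) / π := by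
      rw [div_mul_eq_mul_div]
      gcongr
    have h2 : t * (18 * Real.log 2 + t / 64) / π
        ≤ t * (18 * (0.6931471808 : ℝ) + t / 64) / 3.141592 := by
      gcongr
    linarith
  have hfinal : (N - 5 * t + 4) / 24 - t * (18 * (0.6931471808 : ℝ) + t / 64) / 3.141592 > 6 := by
    rw [← ht2, gt_iff_lt, ← sub_pos]
    have h : (t^2 - 5 * t + 4) / 24 - t * (18 * (0.6931471808 : ℝ) + t / 64) / 3.141592 - 6
        = (3.141592 * 64 * (t^2 - 5*t+4) - 24 * t * (18 * 0.6931471808 * 64 + t)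
            - 6 * 24 * 64 * 3.141592) / (24 * 64 * 3.141592) := by ring
    rw [h]
    apply div_pos _ (by norm_num)
    nlinarith [sq_nonneg (t - 115.32)]
  linarith
end

section
/- The linear change of variables v = 3V - W - X + Y + Z, w = 2V - 2X - 2Y + Z, x = -4V + 3X - Y - 3Z, y = -V + X + Y - Z, z = V - X + Z transforms the three quadrics V·X - V·Y + W·Y - X·Y + Y·Z, V² - V·W + W·X + W·Y + X·Y + V·Z - W·Z + X·Z, 2V·X + W·X - V·Y - X·Y - V·Z - W·Z + 2X·Z - Z² into the span of the three quadrics -v·x + 2w·x - 5v·y - 8v·z + 5w·z - 2x·z + 5y·z + z², w² + w·x + 4w·y - x·y + y² + v·z + 4w·z - 2x·z - 9y·z - 12z², and 2w² + 3w·x + x² - v·y + 9w·y + 2x·y + 6y² + v·z + 12w·z + 5x·z + 3y·z - z². In particular, any common zero of the first three quadrics is mapped to a common zero of the last three. -/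
/-- The explicit linear change of variables sends the model of `X₀⁺(157)` used in
the paper to Galbraith's corrected model: each of Galbraith's three quadrics,
composed with the linear map, lies in the `ℚ`-span of the paper's three quadrics;
in particular, common zeros are mapped to common zeros. -/
theorem X0plus157_model_change :
    ∃ c : Fin 3 → Fin 3 → ℚ,
      ∀ V W X Y Z : ℚ,
        let v := 3 * V - W - X + Y + Z
        let w := 2 * V - 2 * X - 2 * Y + Z
        let x := -4 * V + 3 * X - Y - 3 * Z
        let y := -V + X + Y - Z
        let z := V - X + Z
        let q1 := V * X - V * Y + W * Y - X * Y + Y * Z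
        let q2 := V ^ 2 - V * W + W * X + W * Y + X * Y + V * Z - W * Z + X * Z
        let q3 := 2 * V * X + W * X - V * Y - X * Y - V * Z - W * Z + 2 * X * Z - Z ^ 2
        let g1 := -v * x + 2 * w * x - 5 * v * y - 8 * v * z + 5 * w * z - 2 * x * z
          + 5 * y * z + z ^ 2
        let g2 := w ^ 2 + w * x + 4 * w * y - x * y + y ^ 2 + v * z + 4 * w * z
          - 2 * x * z - 9 * y * z - 12 * z ^ 2
        let g3 := 2 * w ^ 2 + 3 * w * x + x ^ 2 - v * y + 9 * w * y + 2 * x * y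
          + 6 * y ^ 2 + v * z + 12 * w * z + 5 * x * z + 3 * y * z - z ^ 2
        (g1 = c 0 0 * q1 + c 0 1 * q2 + c 0 2 * q3 ∧
         g2 = c 1 0 * q1 + c 1 1 * q2 + c 1 2 * q3 ∧
         g3 = c 2 0 * q1 + c 2 1 * q2 + c 2 2 * q3) ∧
        (q1 = 0 ∧ q2 = 0 ∧ q3 = 0 → g1 = 0 ∧ g2 = 0 ∧ g3 = 0) := by
  use ![![3, 1, -1], ![-1, 1, 0], ![-1, 2, 0]]
  intro V W X Y Z
  refine ⟨⟨?_, ?_, ?_⟩, ?_⟩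
  · simp only [Matrix.cons_val_zero, Matrix.cons_val_one, Matrix.head_cons,
      Matrix.cons_val_two, Matrix.tail_cons]
    ring
  · simp only [Matrix.cons_val_zero, Matrix.cons_val_one, Matrix.head_cons,
      Matrix.cons_val_two, Matrix.tail_cons]
    ring
  · simp only [Matrix.cons_val_zero, Matrix.cons_val_one, Matrix.head_cons,
      Matrix.cons_val_two, Matrix.tail_cons]
    ring
  · rintro ⟨h1, h2, h3⟩
    exact ⟨by linear_combination 3 * h1 + h2 - h3,
           by linear_combination -h1 + h2,
           by linear_combination -h1 + 2 * h2⟩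
end

section
/- The projective curve in P² over Q defined by the homogenization of y³ + (50x³ + 32x² - 4x - 3)y² + (966x⁶ + 1377x⁵ + 459x⁴ - 115x³ - 66x² + x + 2)y + (7056x⁹ + 16128x⁸ + 12744x⁷ + 2856x⁶ - 1239x⁵ - 678x⁴ - 35x³ + 28x² + 4x) = 0 is irreducible over Q. -/
set_option maxHeartbeats 2000000

namespace X0plus137Aux

open MvPolynomial

noncomputable section

local notation "R" => MvPolynomial (Fin 2) ℚ

lemma zmod_check : ∀ u : ZMod 11, u^3 + 75*u^2 + 2624*u + 36864 ≠ 0 := by decide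

lemma cubic_no_rat_root (t : ℚ) : t^3 + 75*t^2 + 2624*t + 36864 ≠ 0 := by
  intro h
  set n : ℤ := t.num with hn
  set d : ℤ := (t.den : ℤ) with hd
  have hd0 : (d : ℚ) ≠ 0 := by
    simp only [hd]
    exact_mod_cast Nat.cast_ne_zero.mpr t.den_nz
  have hkey : (n : ℚ) = t * d := by rw [hn, hd]; push_cast; exact (Rat.mul_den_eq_num t).symm
  have hQ : (n:ℚ)^3 + 75*n^2*d + 2624*n*d^2 + 36864*d^3 = 0 := by
    calc (n:ℚ)^3 + 75*n^2*d + 2624*n*d^2 + 36864*d^3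
        = (d:ℚ)^3 * (t^3 + 75*t^2 + 2624*t + 36864) := by rw [hkey]; ring
      _ = 0 := by rw [h, mul_zero]
  have hZ : n^3 + 75*n^2*d + 2624*n*d^2 + 36864*d^3 = 0 := by exact_mod_cast hQ
  have hdvd : d ∣ n^3 := ⟨-(75*n^2 + 2624*n*d + 36864*d^2), by linarith⟩
  have hcop : IsCoprime d n := by
    rw [Int.isCoprime_iff_gcd_eq_one, Int.gcd_comm]
    exact t.reduced
  have hunit : IsUnit d := (hcop.pow_right (n := 3)).isUnit_of_dvd hdvd
  have hd1 : d = 1 := by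
    rcases Int.isUnit_iff.mp hunit with h1 | h1
    · exact h1
    · exfalso; rw [hd] at h1; omega
  have hZ1 : n^3 + 75*n^2 + 2624*n + 36864 = 0 := by rw [hd1] at hZ; linarith
  have hm : ((n : ZMod 11))^3 + 75*(n:ZMod 11)^2 + 2624*(n:ZMod 11) + 36864 = 0 := by
    have := congrArg (fun x : ℤ => (x : ZMod 11)) hZ1
    push_cast at this
    simpa using this
  exact zmod_check _ hm

def px : R := MvPolynomial.X 0
def pz : R := MvPolynomial.X 1
def pa : R := 50*px^3*pz^4 + 32*px^2*pz^5 - 4*px*pz^6 - 3*pz^7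
def pb : R := 966*px^6*pz^2 + 1377*px^5*pz^3 + 459*px^4*pz^4 - 115*px^3*pz^5
    - 66*px^2*pz^6 + px*pz^7 + 2*pz^8
def pc : R := 7056*px^9 + 16128*px^8*pz + 12744*px^7*pz^2 + 2856*px^6*pz^3
    - 1239*px^5*pz^4 - 678*px^4*pz^5 - 35*px^3*pz^6 + 28*px^2*pz^7 + 4*px*pz^8
def pal : R := 50*px^3 + 32*px^2*pz - 4*px*pz^2 - 3*pz^3
def pbe : R := 966*px^6 + 1377*px^5*pz + 459*px^4*pz^2 - 115*px^3*pz^3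
    - 66*px^2*pz^4 + px*pz^5 + 2*pz^6

def PP : Polynomial R :=
  Polynomial.C pc + Polynomial.C pb * Polynomial.X + Polynomial.C pa * Polynomial.X^2
    + Polynomial.C (pz^6) * Polynomial.X^3

lemma prime_z : Prime (pz : R) := by
  unfold pz
  let e2 := (renameEquiv ℚ (Equiv.swap (0 : Fin 2) 1)).trans (finSuccEquiv ℚ 1)
  rw [← MulEquiv.prime_iff e2.toMulEquiv]
  have h : e2.toMulEquiv (X 1) = Polynomial.X := by
    show e2 (X 1) = Polynomial.X
    simp only [e2, AlgEquiv.trans_apply, renameEquiv_apply, rename_X,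
      Equiv.swap_apply_right, finSuccEquiv_X_zero]
  rw [h]
  exact Polynomial.prime_X

lemma ev10_pc : MvPolynomial.eval ![1, 0] pc = 7056 := by
  simp [pc, px, pz]

lemma z_not_dvd_pc : ¬ (pz ∣ pc) := by
  rintro ⟨w, hw⟩
  have := congrArg (MvPolynomial.eval ![(1:ℚ), 0]) hw
  rw [ev10_pc] at this
  simp [pz] at this

lemma pc_ne_zero : pc ≠ 0 := by
  intro h
  have := ev10_pc
  rw [h] at this
  simp at this

lemma pz_pow_ne_zero : (pz^6 : R) ≠ 0 := pow_ne_zero _ (MvPolynomial.X_ne_zero 1)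

lemma PP_natDegree : PP.natDegree = 3 := by
  unfold PP
  compute_degree!
  exact MvPolynomial.X_ne_zero 1

lemma PP_coeff_three : PP.coeff 3 = pz^6 := by
  unfold PP
  simp only [Polynomial.coeff_add, Polynomial.coeff_mul_X_pow', Polynomial.coeff_C,
    Polynomial.coeff_C_mul, Polynomial.coeff_X, Polynomial.coeff_X_pow]
  norm_num

lemma PP_coeff_zero : PP.coeff 0 = pc := by
  unfold PP
  simp only [Polynomial.coeff_add, Polynomial.coeff_mul_X_pow', Polynomial.coeff_C,
    Polynomial.coeff_C_mul, Polynomial.coeff_X, Polynomial.coeff_X_pow]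
  norm_num

lemma PP_ne_zero : PP ≠ 0 :=
  fun h => pz_pow_ne_zero (by rw [← PP_coeff_three, h, Polynomial.coeff_zero])

lemma PP_leadingCoeff : PP.leadingCoeff = pz^6 := by
  rw [Polynomial.leadingCoeff, PP_natDegree, PP_coeff_three]

lemma no_const_factor (a : R) (hdvd6 : a ∣ pz^6) (hdvdc : a ∣ pc) (hu : ¬ IsUnit a) : False := by
  rcases (dvd_prime_pow prime_z 6).mp hdvd6 with ⟨i, _, hassoc⟩
  rcases Nat.eq_zero_or_pos i with rfl | hi
  · exact hu (associated_one_iff_isUnit.mp (by simpa using hassoc))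
  · exact z_not_dvd_pc ((dvd_pow_self pz hi.ne').trans (hassoc.symm.dvd.trans hdvdc))

lemma no_linear_factor (L Q : Polynomial R) (hLQ : PP = L * Q) (hL1 : L.natDegree = 1) :
    False := by
  classical
  set K := FractionRing R
  let algK : R →+* K := algebraMap R K
  have inj : Function.Injective algK := IsFractionRing.injective R K
  have hmap : PP.map algK = L.map algK * Q.map algK := by rw [hLQ, Polynomial.map_mul]
  set LK := L.map algK with hLK
  have hLK1 : LK.natDegree = 1 := by
    rw [hLK, Polynomial.natDegree_map_eq_of_injective inj, hL1]
  have hLKne : LK ≠ 0 := fun h => by simp [h] at hLK1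
  have hc1 : LK.coeff 1 ≠ 0 := by
    have := Polynomial.leadingCoeff_ne_zero.mpr hLKne
    rwa [Polynomial.leadingCoeff, hLK1] at this
  set r : K := -(LK.coeff 0) / LK.coeff 1 with hr
  have hLKr : LK.eval r = 0 := by
    have hdeg : LK.degree ≤ 1 := by
      rw [Polynomial.degree_eq_natDegree hLKne, hLK1]; norm_num
    conv_lhs => rw [Polynomial.eq_X_add_C_of_degree_le_one hdeg]
    simp only [Polynomial.eval_add, Polynomial.eval_mul, Polynomial.eval_C, Polynomial.eval_X]
    rw [hr, mul_div_cancel₀ _ hc1]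
    ring
  have hPKr : (PP.map algK).eval r = 0 := by rw [hmap, Polynomial.eval_mul, hLKr, zero_mul]
  have hexp : algK pz ^ 6 * r^3 + algK pa * r^2 + algK pb * r + algK pc = 0 := by
    unfold PP at hPKr
    simp only [Polynomial.map_add, Polynomial.map_mul, Polynomial.map_pow, Polynomial.map_C,
      Polynomial.map_X, Polynomial.eval_add, Polynomial.eval_mul, Polynomial.eval_pow,
      Polynomial.eval_C, Polynomial.eval_X, map_pow] at hPKr
    linear_combination hPKr
  have rala : pa = pz^4 * pal := by unfold pa pal; ring
  have rbbe : pb = pz^2 * pbe := by unfold pb pbe; ring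
  set u : K := algK pz ^ 2 * r with hu
  have hueq : u^3 + algK pal * u^2 + algK pbe * u + algK pc = 0 := by
    have e1 : algK pa = algK pz ^ 4 * algK pal := by rw [← map_pow, ← map_mul, ← rala]
    have e2 : algK pb = algK pz ^ 2 * algK pbe := by rw [← map_pow, ← map_mul, ← rbbe]
    rw [e1, e2] at hexp
    rw [hu]
    linear_combination hexp
  set M : Polynomial R := Polynomial.X^3 + Polynomial.C pal * Polynomial.X^2
      + Polynomial.C pbe * Polynomial.X ^ 1 + Polynomial.C pc with hM
  have hMmonic : M.Monic := by
    apply Polynomial.monic_of_natDegree_le_of_coeff_eq_one 3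
    · rw [hM]; compute_degree
    · rw [hM]
      simp only [Polynomial.coeff_add, Polynomial.coeff_X_pow, Polynomial.coeff_C,
        Polynomial.coeff_C_mul]
      norm_num
  have hint : IsIntegral R u := by
    refine ⟨M, hMmonic, ?_⟩
    show Polynomial.eval₂ algK u M = 0
    rw [hM]
    simp only [Polynomial.eval₂_add, Polynomial.eval₂_mul, Polynomial.eval₂_pow,
      Polynomial.eval₂_C, Polynomial.eval₂_X]
    linear_combination hueq
  obtain ⟨s, hs⟩ := IsIntegrallyClosed.isIntegral_iff.mp hint
  have hseval : s^3 + pal*s^2 + pbe*s + pc = 0 := by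
    apply inj
    rw [map_add, map_add, map_add, map_mul, map_mul, map_pow, map_pow, map_zero, hs]
    linear_combination hueq
  have hfinal := congrArg (MvPolynomial.eval ![(1:ℚ), 1]) hseval
  simp only [map_add, map_mul, map_pow, map_zero] at hfinal
  have h75 : MvPolynomial.eval ![(1:ℚ), 1] pal = 75 := by simp [pal, px, pz]; norm_num
  have h2624 : MvPolynomial.eval ![(1:ℚ), 1] pbe = 2624 := by simp [pbe, px, pz]; norm_num
  have h36864 : MvPolynomial.eval ![(1:ℚ), 1] pc = 36864 := by simp [pc, px, pz]; norm_num
  rw [h75, h2624, h36864] at hfinal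
  exact cubic_no_rat_root _ hfinal

lemma PP_irreducible : Irreducible PP := by
  rw [irreducible_iff]
  constructor
  · intro h
    have := Polynomial.natDegree_eq_zero_of_isUnit h
    rw [PP_natDegree] at this
    omega
  · intro A B hAB
    by_contra hcon
    push_neg at hcon
    obtain ⟨hA, hB⟩ := hcon
    have hA0 : A ≠ 0 := by rintro rfl; rw [zero_mul] at hAB; exact PP_ne_zero hAB
    have hB0 : B ≠ 0 := by rintro rfl; rw [mul_zero] at hAB; exact PP_ne_zero hAB
    have hsum : A.natDegree + B.natDegree = 3 := by
      rw [← Polynomial.natDegree_mul hA0 hB0, ← hAB, PP_natDegree]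
    have hlead : A.leadingCoeff * B.leadingCoeff = pz^6 := by
      rw [← Polynomial.leadingCoeff_mul, ← hAB, PP_leadingCoeff]
    have hzero : A.coeff 0 * B.coeff 0 = pc := by
      rw [← Polynomial.mul_coeff_zero, ← hAB, PP_coeff_zero]
    rcases Nat.eq_zero_or_pos A.natDegree with hA1 | hA1
    · obtain ⟨a, ha⟩ := Polynomial.natDegree_eq_zero.mp hA1
      have hua : ¬ IsUnit a := fun h => hA (ha ▸ Polynomial.isUnit_C.mpr h)
      have h6 : a ∣ pz^6 := ⟨B.leadingCoeff, by rw [← hlead, ← ha, Polynomial.leadingCoeff_C]⟩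
      have hcdvd : a ∣ pc := ⟨B.coeff 0, by rw [← hzero, ← ha, Polynomial.coeff_C_zero]⟩
      exact no_const_factor a h6 hcdvd hua
    rcases Nat.eq_zero_or_pos B.natDegree with hB1 | hB1
    · obtain ⟨b, hb⟩ := Polynomial.natDegree_eq_zero.mp hB1
      have hub : ¬ IsUnit b := fun h => hB (hb ▸ Polynomial.isUnit_C.mpr h)
      have h6 : b ∣ pz^6 :=
        ⟨A.leadingCoeff, by rw [mul_comm] at hlead; rw [← hlead, ← hb, Polynomial.leadingCoeff_C]⟩
      have hcdvd : b ∣ pc :=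
        ⟨A.coeff 0, by rw [mul_comm] at hzero; rw [← hzero, ← hb, Polynomial.coeff_C_zero]⟩
      exact no_const_factor b h6 hcdvd hub
    rcases (by omega : A.natDegree = 1 ∨ B.natDegree = 1) with h1 | h1
    · exact no_linear_factor A B hAB h1
    · exact no_linear_factor B A (by rw [hAB, mul_comm]) h1

def ee : MvPolynomial (Fin 3) ℚ ≃ₐ[ℚ] Polynomial R :=
  (renameEquiv ℚ (Equiv.swap (0 : Fin 3) 1)).trans (finSuccEquiv ℚ 2)

lemma ee_X0 : ee (X 0) = Polynomial.C px := by
  simp only [ee, AlgEquiv.trans_apply, renameEquiv_apply, rename_X, Equiv.swap_apply_left]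
  show finSuccEquiv ℚ 2 (X (Fin.succ 0)) = _
  rw [finSuccEquiv_X_succ]
  rfl

lemma ee_X1 : ee (X 1) = Polynomial.X := by
  simp only [ee, AlgEquiv.trans_apply, renameEquiv_apply, rename_X, Equiv.swap_apply_right,
    finSuccEquiv_X_zero]

lemma ee_X2 : ee (X 2) = Polynomial.C pz := by
  have h2 : Equiv.swap (0 : Fin 3) 1 2 = 2 := by decide
  simp only [ee, AlgEquiv.trans_apply, renameEquiv_apply, rename_X, h2]
  show finSuccEquiv ℚ 2 (X (Fin.succ 1)) = _
  rw [finSuccEquiv_X_succ]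
  rfl

lemma ee_C (q : ℚ) : ee (C q) = Polynomial.C (MvPolynomial.C q) := by
  simp [ee, finSuccEquiv_apply]

lemma ee_P : ee
      (C (1 : ℚ) * X 1 ^ 3 * X 2 ^ 6 +
      C (50) * X 0 ^ 3 * X 1 ^ 2 * X 2 ^ 4 +
      C (32) * X 0 ^ 2 * X 1 ^ 2 * X 2 ^ 5 +
      C (-4) * X 0 * X 1 ^ 2 * X 2 ^ 6 +
      C (-3) * X 1 ^ 2 * X 2 ^ 7 +
      C (966) * X 0 ^ 6 * X 1 * X 2 ^ 2 +
      C (1377) * X 0 ^ 5 * X 1 * X 2 ^ 3 +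
      C (459) * X 0 ^ 4 * X 1 * X 2 ^ 4 +
      C (-115) * X 0 ^ 3 * X 1 * X 2 ^ 5 +
      C (-66) * X 0 ^ 2 * X 1 * X 2 ^ 6 +
      C (1) * X 0 * X 1 * X 2 ^ 7 +
      C (2) * X 1 * X 2 ^ 8 +
      C (7056) * X 0 ^ 9 +
      C (16128) * X 0 ^ 8 * X 2 +
      C (12744) * X 0 ^ 7 * X 2 ^ 2 +
      C (2856) * X 0 ^ 6 * X 2 ^ 3 +
      C (-1239) * X 0 ^ 5 * X 2 ^ 4 +
      C (-678) * X 0 ^ 4 * X 2 ^ 5 +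
      C (-35) * X 0 ^ 3 * X 2 ^ 6 +
      C (28) * X 0 ^ 2 * X 2 ^ 7 +
      C (4) * X 0 * X 2 ^ 8 : MvPolynomial (Fin 3) ℚ) = PP := by
  simp only [map_add, map_mul, map_pow, ee_X0, ee_X1, ee_X2, ee_C, map_neg, map_one,
    map_ofNat]
  unfold PP pa pb pc px pz
  simp only [map_add, map_sub, map_mul, map_pow, map_neg, map_ofNat, map_one]
  ring

end

end X0plus137Aux

open MvPolynomial in
/-- The homogeneous degree-9 polynomial in `ℚ[x, y, z]` obtained by homogenizing
the plane model `C_{137,1}` of `X₀⁺(137)`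
`y³ + (50x³+32x²-4x-3)y² + (966x⁶+1377x⁵+459x⁴-115x³-66x²+x+2)y
  + (7056x⁹+16128x⁸+12744x⁷+2856x⁶-1239x⁵-678x⁴-35x³+28x²+4x)`
is irreducible over `ℚ`; i.e. the projective plane curve it defines is
irreducible over `ℚ`. -/
theorem X0plus137_plane_model_irreducible :
    Irreducible
      ((C (1 : ℚ) * X 1 ^ 3 * X 2 ^ 6 +
      C (50) * X 0 ^ 3 * X 1 ^ 2 * X 2 ^ 4 +
      C (32) * X 0 ^ 2 * X 1 ^ 2 * X 2 ^ 5 +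
      C (-4) * X 0 * X 1 ^ 2 * X 2 ^ 6 +
      C (-3) * X 1 ^ 2 * X 2 ^ 7 +
      C (966) * X 0 ^ 6 * X 1 * X 2 ^ 2 +
      C (1377) * X 0 ^ 5 * X 1 * X 2 ^ 3 +
      C (459) * X 0 ^ 4 * X 1 * X 2 ^ 4 +
      C (-115) * X 0 ^ 3 * X 1 * X 2 ^ 5 +
      C (-66) * X 0 ^ 2 * X 1 * X 2 ^ 6 +
      C (1) * X 0 * X 1 * X 2 ^ 7 +
      C (2) * X 1 * X 2 ^ 8 +
      C (7056) * X 0 ^ 9 +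
      C (16128) * X 0 ^ 8 * X 2 +
      C (12744) * X 0 ^ 7 * X 2 ^ 2 +
      C (2856) * X 0 ^ 6 * X 2 ^ 3 +
      C (-1239) * X 0 ^ 5 * X 2 ^ 4 +
      C (-678) * X 0 ^ 4 * X 2 ^ 5 +
      C (-35) * X 0 ^ 3 * X 2 ^ 6 +
      C (28) * X 0 ^ 2 * X 2 ^ 7 +
      C (4) * X 0 * X 2 ^ 8 : MvPolynomial (Fin 3) ℚ)) := by
  exact (MulEquiv.irreducible_iff X0plus137Aux.ee.toMulEquiv).mp
    (by show Irreducible (X0plus137Aux.ee _); rw [X0plus137Aux.ee_P];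
        exact X0plus137Aux.PP_irreducible)
end
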